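/- Let V_n ⊆ V and Q_n ⊆ Q be finite-dimensional subspaces, with Q_n spanned by linearly independent elements ψ₁,…,ψ_{n_Q} ∈ M, and let M_n := {Σ_j c_j ψ_j : c_j ≥ 0} ⊆ Q_n be the generated convex cone. Suppose the discrete inf-sup constant β_n := inf_{q_n ∈ Q_n, q_n≠0} sup_{v_n ∈ V_n, v_n≠0} b(v_n, q_n)/(‖q_n‖_Q‖v_n‖_V) ≥ β₀ > 0. Then there exists a unique pair (u_n, λ_n) ∈ V_n × Q_n satisfying: a(u_n, v_n) + b(v_n, λ_n) = f(v_n) for all v_n ∈ V_n; g(q_n) − b(u_n, q_n) ≥ 0 for all q_n ∈ M_n; λ_n ∈ M_n; and g(λ_n) − b(u_n, λ_n) = 0. -/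

import Mathlib

set_option maxHeartbeats 4000000

open RealInnerProductSpace

lemma stampacchia {E : Type*} [NormedAddCommGroup E] [InnerProductSpace ℝ E]
    [CompleteSpace E] (K : Set E) (hne : K.Nonempty) (hcl : IsClosed K)
    (hcv : Convex ℝ K) (A : E →L[ℝ] E →L[ℝ] ℝ) (α : ℝ) (hα : 0 < α)
    (hco : ∀ x, α * ‖x‖ ^ 2 ≤ A x x) (F : E →L[ℝ] ℝ) :
    ∃ u ∈ K, ∀ v ∈ K, F (v - u) ≤ A u (v - u) := by
  -- projection onto K
  have hP : ∀ x : E, ∃ p, p ∈ K ∧ ∀ w ∈ K, ⟪x - p, w - p⟫ ≤ 0 := by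
    intro x
    obtain ⟨v, hv, he⟩ := exists_norm_eq_iInf_of_complete_convex hne hcl.isComplete hcv x
    exact ⟨v, hv, (norm_eq_iInf_iff_real_inner_le_zero hcv hv).1 he⟩
  choose P hPK hPvi using hP
  have hPlip : ∀ x y, ‖P x - P y‖ ≤ ‖x - y‖ := by
    intro x y
    have e1 := hPvi x (P y) (hPK y)
    have e2 := hPvi y (P x) (hPK x)
    have key : ‖P x - P y‖ ^ 2 ≤ ⟪x - y, P x - P y⟫ := by
      have hdecomp : x - y = (x - P x) + (P x - P y) + (P y - y) := by abel
      rw [hdecomp, inner_add_left, inner_add_left, real_inner_self_eq_norm_sq]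
      have e1' : 0 ≤ ⟪x - P x, P x - P y⟫ := by
        rw [show P y - P x = -(P x - P y) by abel, inner_neg_right] at e1
        linarith
      have e2' : 0 ≤ ⟪P y - y, P x - P y⟫ := by
        rw [show P y - y = -(y - P y) by abel, inner_neg_left]
        linarith
      linarith
    rcases eq_or_ne (P x - P y) 0 with h0 | h0
    · have : ‖P x - P y‖ = 0 := by simp [h0]
      rw [this]; positivity
    · have hn : 0 < ‖P x - P y‖ := norm_pos_iff.2 h0
      have := real_inner_le_norm (x - y) (P x - P y)
      nlinarith
  -- Riesz representation
  set e := (InnerProductSpace.toDual ℝ E).symm with he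
  have hT : ∀ (φ : E →L[ℝ] ℝ) (y : E), ⟪e φ, y⟫ = φ y := fun φ y =>
    InnerProductSpace.toDual_symm_apply
  set C : ℝ := max ‖A‖ α with hC
  have hC0 : 0 < C := lt_of_lt_of_le hα (le_max_right _ _)
  have hCα : α ≤ C := le_max_right _ _
  have hTC : ∀ x, ‖e (A x)‖ ≤ C * ‖x‖ := by
    intro x
    rw [LinearIsometryEquiv.norm_map]
    calc ‖A x‖ ≤ ‖A‖ * ‖x‖ := A.le_opNorm x
    _ ≤ C * ‖x‖ := by
        apply mul_le_mul_of_nonneg_right (le_max_left _ _) (norm_nonneg _)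
  set ρ : ℝ := α / C ^ 2 with hρ
  have hρ0 : 0 < ρ := by positivity
  set wF := e F with hwF
  set Φ : E → E := fun x => P (x - ρ • (e (A x) - wF)) with hΦ
  have hcontract : ∀ x y, ‖Φ x - Φ y‖ ^ 2 ≤ (1 - (α / C) ^ 2) * ‖x - y‖ ^ 2 := by
    intro x y
    have hz : (x - ρ • (e (A x) - wF)) - (y - ρ • (e (A y) - wF))
        = (x - y) - ρ • (e (A (x - y))) := by
      rw [map_sub A, map_sub e]
      module
    have h1 : ‖Φ x - Φ y‖ ≤ ‖(x - y) - ρ • (e (A (x - y)))‖ := by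
      rw [hΦ]
      calc ‖P (x - ρ • (e (A x) - wF)) - P (y - ρ • (e (A y) - wF))‖
          ≤ ‖(x - ρ • (e (A x) - wF)) - (y - ρ • (e (A y) - wF))‖ := hPlip _ _
        _ = _ := by rw [hz]
    set z := x - y with hzdef
    have h2 : ‖z - ρ • (e (A z))‖ ^ 2 ≤ (1 - (α / C) ^ 2) * ‖z‖ ^ 2 := by
      have expand : ‖z - ρ • (e (A z))‖ ^ 2
          = ‖z‖ ^ 2 - 2 * ⟪z, ρ • (e (A z))⟫ + ‖ρ • (e (A z))‖ ^ 2 := by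
        rw [norm_sub_sq_real]
      have hinn : ⟪z, ρ • (e (A z))⟫ = ρ * (A z z) := by
        rw [real_inner_smul_right, real_inner_comm, hT]
      have hnrm : ‖ρ • (e (A z))‖ ^ 2 ≤ ρ ^ 2 * (C * ‖z‖) ^ 2 := by
        rw [norm_smul, mul_pow, show ‖ρ‖ = ρ from abs_of_pos hρ0]
        have h2 : ‖e (A z)‖ ^ 2 ≤ (C * ‖z‖) ^ 2 :=
          pow_le_pow_left₀ (norm_nonneg _) (hTC z) 2
        exact mul_le_mul_of_nonneg_left h2 (sq_nonneg ρ)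
      have hcoz := hco z
      have hrho : ρ * C ^ 2 = α := by rw [hρ]; exact div_mul_cancel₀ α (pow_ne_zero 2 hC0.ne')
      have hN : ρ ^ 2 * (C * ‖z‖) ^ 2 = ρ * α * ‖z‖ ^ 2 := by
        rw [← hrho]; ring
      have hfr : (α / C) ^ 2 = ρ * α := by rw [hρ]; field_simp
      have hmul : ρ * (α * ‖z‖ ^ 2) ≤ ρ * (A z z) :=
        mul_le_mul_of_nonneg_left hcoz hρ0.le
      rw [expand, hinn, hfr]
      nlinarith [hnrm, hN, hmul]
    calc ‖Φ x - Φ y‖ ^ 2 ≤ ‖z - ρ • (e (A z))‖ ^ 2 := by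
          nlinarith [h1, norm_nonneg (Φ x - Φ y), norm_nonneg (z - ρ • (e (A z)))]
      _ ≤ _ := h2
  set k : ℝ := Real.sqrt (1 - (α / C) ^ 2) with hk
  have hk0 : 0 ≤ k := Real.sqrt_nonneg _
  have hfrac : 0 < α / C := by positivity
  have hfrac1 : α / C ≤ 1 := by rw [div_le_one hC0]; exact hCα
  have hnn : 0 ≤ 1 - (α / C) ^ 2 := by nlinarith
  have hksq : k ^ 2 = 1 - (α / C) ^ 2 := Real.sq_sqrt hnn
  have hk1 : k < 1 := by
    refine lt_of_pow_lt_pow_left₀ 2 zero_le_one ?_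
    rw [hksq, one_pow]
    nlinarith [hfrac]
  have hlip : ∀ x y, dist (Φ x) (Φ y) ≤ k * dist x y := by
    intro x y
    rw [dist_eq_norm, dist_eq_norm]
    have := hcontract x y
    nlinarith [norm_nonneg (Φ x - Φ y), norm_nonneg (x - y),
      mul_nonneg hk0 (norm_nonneg (x - y))]
  have hcw : ContractingWith k.toNNReal Φ := by
    constructor
    · exact_mod_cast Real.toNNReal_lt_one.2 hk1
    · apply LipschitzWith.of_dist_le_mul
      intro x y
      rw [Real.coe_toNNReal k hk0]
      exact hlip x y
  haveI : Nonempty E := ⟨hne.some⟩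
  obtain ⟨u, hfix⟩ : ∃ u, Φ u = u := ⟨_, hcw.fixedPoint_isFixedPt⟩
  have huK : u ∈ K := by rw [← hfix]; exact hPK _
  refine ⟨u, huK, fun v hv => ?_⟩
  have hvi := hPvi (u - ρ • (e (A u) - wF)) v hv
  rw [show P (u - ρ • (e (A u) - wF)) = u from hfix] at hvi
  rw [show (u - ρ • (e (A u) - wF)) - u = -(ρ • (e (A u) - wF)) by abel] at hvi
  rw [inner_neg_left, neg_nonpos, real_inner_smul_left, inner_sub_left, hT,
    hwF, hT] at hvi
  nlinarith [hvi, hρ0]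

/-- Discrete KKT system: on finite-dimensional subspaces `V_n` and
`Q_n = span{ψ₁,…,ψ_{n_Q}}` with `ψ_j ∈ M` linearly independent, under the
discrete inf-sup condition there exists a unique discrete KKT pair `(u_n, λ_n)`. -/
theorem stmt_5 {V Q : Type*}
    [NormedAddCommGroup V] [InnerProductSpace ℝ V] [CompleteSpace V]
    [NormedAddCommGroup Q] [InnerProductSpace ℝ Q] [CompleteSpace Q]
    (a : V →L[ℝ] V →L[ℝ] ℝ) (α : ℝ) (hα : 0 < α)
    (hcoer : ∀ v : V, α * ‖v‖ ^ 2 ≤ a v v)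
    (b : V →L[ℝ] Q →L[ℝ] ℝ) (f : V →L[ℝ] ℝ) (g : Q →L[ℝ] ℝ)
    (M : Set Q) (hMne : M.Nonempty) (hMcl : IsClosed M) (hMcv : Convex ℝ M)
    (hMcone : ∀ c : ℝ, 0 ≤ c → ∀ q ∈ M, c • q ∈ M)
    (Vn : Submodule ℝ V) (hVn : FiniteDimensional ℝ Vn)
    (nQ : ℕ) (ψ : Fin nQ → Q) (hψM : ∀ j, ψ j ∈ M)
    (hψli : LinearIndependent ℝ ψ)
    (Qn : Submodule ℝ Q) (hQn : Qn = Submodule.span ℝ (Set.range ψ))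
    (Mn : Set Q)
    (hMn : Mn = {q : Q | ∃ c : Fin nQ → ℝ, (∀ j, 0 ≤ c j) ∧ q = ∑ j, c j • ψ j})
    (β₀ : ℝ) (hβ₀ : 0 < β₀)
    (hinfsup : ∀ qn ∈ Qn, qn ≠ 0 →
      β₀ * ‖qn‖ ≤ sSup {r : ℝ | ∃ vn ∈ Vn, vn ≠ 0 ∧ r = b vn qn / ‖vn‖})
    (hKnne : {vn : V | vn ∈ Vn ∧ ∀ qn ∈ Mn, b vn qn ≤ g qn}.Nonempty) :
    ∃! p : V × Q, p.1 ∈ Vn ∧ p.2 ∈ Qn ∧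
      (∀ vn ∈ Vn, a p.1 vn + b vn p.2 = f vn) ∧
      (∀ qn ∈ Mn, 0 ≤ g qn - b p.1 qn) ∧
      p.2 ∈ Mn ∧ g p.2 - b p.1 p.2 = 0 := by
  classical
  haveI := hVn
  haveI : CompleteSpace Vn := FiniteDimensional.complete ℝ Vn
  -- injectivity of q ↦ b ·|Vn q on Qn, from the inf-sup condition
  have hinj : ∀ q ∈ Qn, (∀ v ∈ Vn, b v q = 0) → q = 0 := by
    intro q hq hbq
    by_contra hq0
    have hs := hinfsup q hq hq0
    have hsup : sSup {r : ℝ | ∃ vn ∈ Vn, vn ≠ 0 ∧ r = b vn q / ‖vn‖} ≤ 0 := by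
      apply Real.sSup_le _ le_rfl
      rintro r ⟨v, hv, -, rfl⟩
      rw [hbq v hv]
      simp
    have hq0' : 0 < ‖q‖ := norm_pos_iff.2 hq0
    nlinarith
  -- basic linearity facts
  have hbsum : ∀ (v : V) (c : Fin nQ → ℝ),
      b v (∑ j, c j • ψ j) = ∑ j, c j * b v (ψ j) := by
    intro v c
    rw [map_sum]
    simp
  have hgsum : ∀ c : Fin nQ → ℝ, g (∑ j, c j • ψ j) = ∑ j, c j * g (ψ j) := by
    intro c
    rw [map_sum]
    simp
  have hψMn : ∀ j, ψ j ∈ Mn := by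
    intro j
    rw [hMn]
    refine ⟨Pi.single j 1, fun i => ?_, ?_⟩
    · rcases eq_or_ne i j with h | h <;> simp [Pi.single_apply, h]
    · simp [Pi.single_apply]
  -- the discrete bilinear forms on Vn
  set aV : Vn →L[ℝ] Vn →L[ℝ] ℝ := ((a.comp Vn.subtypeL).flip.comp Vn.subtypeL).flip with haVdef
  have haV : ∀ x y : Vn, aV x y = a ↑x ↑y := fun x y => rfl
  set fV : Vn →L[ℝ] ℝ := f.comp Vn.subtypeL with hfVdef
  have hfV : ∀ x : Vn, fV x = f ↑x := fun x => rfl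
  set K : Set Vn := {v : Vn | ∀ q ∈ Mn, b ↑v q ≤ g q} with hKdef
  have hKcl : IsClosed K := by
    have hKeq : K = ⋂ q ∈ Mn, {v : Vn | b ↑v q ≤ g q} := by
      ext v
      simp [hKdef, Set.mem_iInter]
    rw [hKeq]
    refine isClosed_biInter fun q _ => ?_
    exact isClosed_le (((b.flip q).comp Vn.subtypeL).continuous) continuous_const
  have hKcv : Convex ℝ K := by
    intro x hx y hy s t hs ht hst q hq
    have hcoe : ((s • x + t • y : Vn) : V) = s • (x : V) + t • (y : V) := by
      simp
    have hb' : b ((s • x + t • y : Vn) : V) q = s * b ↑x q + t * b ↑y q := by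
      rw [hcoe]
      simp
    rw [hb']
    calc s * b ↑x q + t * b ↑y q ≤ s * g q + t * g q := by
          gcongr <;> [exact hx q hq; exact hy q hq]
      _ = g q := by rw [← add_mul, hst, one_mul]
  obtain ⟨v₀, hv₀Vn, hv₀K⟩ := hKnne
  have hKne : K.Nonempty := ⟨⟨v₀, hv₀Vn⟩, hv₀K⟩
  have hcoerV : ∀ x : Vn, α * ‖x‖ ^ 2 ≤ aV x x := by
    intro x
    have := hcoer (x : V)
    exact this
  obtain ⟨u, huK, hVI⟩ := stampacchia K hKne hKcl hKcv aV α hα hcoerV fV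
  -- Riesz representation machinery on Vn
  set eV := (InnerProductSpace.toDual ℝ Vn).symm with heV
  have hTd : ∀ (φ : Vn →L[ℝ] ℝ) (y : Vn), ⟪eV φ, y⟫ = φ y := fun φ y =>
    InnerProductSpace.toDual_symm_apply
  set φv : Fin nQ → (Vn →L[ℝ] ℝ) := fun j => (b.flip (ψ j)).comp Vn.subtypeL with hφv
  have hφvapp : ∀ j (v : Vn), φv j v = b ↑v (ψ j) := fun j v => rfl
  set wvec : Fin nQ → Vn := fun j => eV (φv j) with hwvec
  set ℓ : Vn →L[ℝ] ℝ := fV - aV u with hℓ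
  set w : Vn := eV ℓ with hw
  have hwapp : ∀ v : Vn, ⟪w, v⟫ = fV v - aV u v := by
    intro v
    rw [hw, hTd]
    rfl
  -- w lies in the span of the wvec's
  have hspan : w ∈ Submodule.span ℝ (Set.range wvec) := by
    haveI : CompleteSpace ↥(Submodule.span ℝ (Set.range wvec)) :=
      FiniteDimensional.complete ℝ _
    rw [← Submodule.orthogonal_orthogonal (Submodule.span ℝ (Set.range wvec))]
    rw [Submodule.mem_orthogonal]
    intro z hz
    have hzj : ∀ j, b (↑z) (ψ j) = 0 := by
      intro j
      have h1 : ⟪wvec j, z⟫ = 0 :=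
        hz (wvec j) (Submodule.subset_span (Set.mem_range_self j))
      rw [hwvec] at h1
      rw [hTd] at h1
      exact h1
    have hbz : ∀ q ∈ Mn, b (↑z) q = 0 := by
      intro q hq
      rw [hMn] at hq
      obtain ⟨c, _, rfl⟩ := hq
      rw [hbsum]
      simp [hzj]
    have hup : (u + z) ∈ K := by
      intro q hq
      have hcoe : ((u + z : Vn) : V) = (u : V) + z := rfl
      have : b ((u + z : Vn) : V) q = b ↑u q + b ↑z q := by rw [hcoe]; simp
      rw [this, hbz q hq, add_zero]
      exact huK q hq
    have hdn : (u - z) ∈ K := by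
      intro q hq
      have hcoe : ((u - z : Vn) : V) = (u : V) - z := rfl
      have : b ((u - z : Vn) : V) q = b ↑u q - b ↑z q := by rw [hcoe]; simp
      rw [this, hbz q hq, sub_zero]
      exact huK q hq
    have h1 := hVI (u + z) hup
    have h2 := hVI (u - z) hdn
    rw [show u + z - u = z by abel] at h1
    rw [show u - z - u = -z by abel] at h2
    rw [map_neg, map_neg] at h2
    have heqz : fV z = aV u z := le_antisymm h1 (by linarith)
    rw [real_inner_comm, hwapp, heqz, sub_self]
  obtain ⟨d, hd⟩ := (Submodule.mem_span_range_iff_exists_fun ℝ).1 hspan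
  -- the representation of the residual functional
  have hrep : ∀ v : Vn, fV v - aV u v = ∑ j, d j * b ↑v (ψ j) := by
    intro v
    rw [← hwapp, ← hd, sum_inner]
    congr 1
    ext j
    rw [real_inner_smul_left, hwvec, hTd]
    rfl
  -- surjectivity of v ↦ (b v ψj)j from the inf-sup condition
  have hsurj : ∀ x : Fin nQ → ℝ, ∃ v : Vn, ∀ j, b ↑v (ψ j) = x j := by
    set Lmap : Vn →ₗ[ℝ] EuclideanSpace ℝ (Fin nQ) :=
      { toFun := fun v => (WithLp.toLp 2 (fun j => b ↑v (ψ j)) : EuclideanSpace ℝ (Fin nQ))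
        map_add' := by
          intro x y
          ext j
          have hcoe : ((x + y : Vn) : V) = (x : V) + y := rfl
          show b ((x + y : Vn) : V) (ψ j) = _
          rw [hcoe]
          simp
        map_smul' := by
          intro c x
          ext j
          have hcoe : ((c • x : Vn) : V) = c • (x : V) := rfl
          show b ((c • x : Vn) : V) (ψ j) = _
          rw [hcoe]
          simp } with hLmap
    have hLtop : LinearMap.range Lmap = ⊤ := by
      by_contra hne'
      haveI : CompleteSpace ↥(LinearMap.range Lmap) := FiniteDimensional.complete ℝ _
      have hbot : (LinearMap.range Lmap)ᗮ ≠ ⊥ := fun h =>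
        hne' (Submodule.orthogonal_eq_bot_iff.1 h)
      obtain ⟨d0, hd0mem, hd0ne⟩ := Submodule.exists_mem_ne_zero_of_ne_bot hbot
      have hq0 : ∀ v ∈ Vn, b v (∑ j, d0 j • ψ j) = 0 := by
        intro v hv
        have h1 : ⟪Lmap ⟨v, hv⟩, d0⟫ = 0 :=
          (Submodule.mem_orthogonal _ _).1 hd0mem _ (LinearMap.mem_range_self _ _)
        rw [PiLp.inner_apply] at h1
        simp only [RCLike.inner_apply, conj_trivial] at h1
        rw [hbsum, ← h1]
        refine Finset.sum_congr rfl fun j _ => ?_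
        show d0 j * b v (ψ j) = d0 j * Lmap ⟨v, hv⟩ j
        rw [show Lmap ⟨v, hv⟩ j = b v (ψ j) from rfl]
      have hmemQn : (∑ j, d0 j • ψ j) ∈ Qn := by
        rw [hQn]
        exact Submodule.sum_mem _ fun j _ =>
          Submodule.smul_mem _ _ (Submodule.subset_span (Set.mem_range_self j))
      have hzero : (∑ j, d0 j • ψ j) = 0 := hinj _ hmemQn hq0
      have := Fintype.linearIndependent_iff.1 hψli d0 hzero
      exact hd0ne (PiLp.ext this)
    intro x
    have hx : (WithLp.toLp 2 x : EuclideanSpace ℝ (Fin nQ)) ∈ LinearMap.range Lmap := by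
      rw [hLtop]
      trivial
    obtain ⟨v, hv⟩ := hx
    exact ⟨v, fun j => congrArg (fun y : EuclideanSpace ℝ (Fin nQ) => y j) hv⟩
  -- coordinatewise description of K
  set G : Fin nQ → ℝ := fun j => g (ψ j) with hG
  have hmemK : ∀ v : Vn, (∀ j, b ↑v (ψ j) ≤ G j) → v ∈ K := by
    intro v h q hq
    rw [hMn] at hq
    obtain ⟨c, hc, rfl⟩ := hq
    rw [hbsum, hgsum]
    exact Finset.sum_le_sum fun j _ => mul_le_mul_of_nonneg_left (h j) (hc j)
  have huG : ∀ j, b ↑u (ψ j) ≤ G j := fun j => huK (ψ j) (hψMn j)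
  -- max property of u
  have hmax : ∀ v ∈ K, (∑ j, d j * b (↑v : V) (ψ j)) ≤ ∑ j, d j * b (↑u : V) (ψ j) := by
    intro v hv
    have h1 := hVI v hv
    have h2 := hrep (v - u)
    have h3 : (∑ j, d j * b (↑(v - u) : V) (ψ j)) ≤ 0 := by rw [← h2]; linarith
    have h4 : ∀ j, b (↑(v - u) : V) (ψ j) = b ↑v (ψ j) - b ↑u (ψ j) := by
      intro j
      have hcoe : ((v - u : Vn) : V) = (v : V) - u := rfl
      rw [hcoe]
      simp
    calc (∑ j, d j * b (↑v : V) (ψ j))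
        = (∑ j, d j * b (↑(v - u) : V) (ψ j)) + ∑ j, d j * b (↑u : V) (ψ j) := by
          rw [← Finset.sum_add_distrib]
          congr 1
          ext j
          rw [h4]
          ring
      _ ≤ ∑ j, d j * b (↑u : V) (ψ j) := by linarith
  -- the x = G case
  have hGle : (∑ i, d i * G i) ≤ ∑ i, d i * b (↑u : V) (ψ i) := by
    obtain ⟨vG, hvG⟩ := hsurj G
    have := hmax vG (hmemK vG fun i => (hvG i).le)
    calc (∑ i, d i * G i) = ∑ i, d i * b (↑vG : V) (ψ i) := by
          congr 1; ext i; rw [hvG]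
      _ ≤ _ := this
  -- nonnegativity of the multipliers
  have hd0 : ∀ j, 0 ≤ d j := by
    intro j
    by_contra hneg
    push_neg at hneg
    set t : ℝ := ((∑ i, d i * b (↑u : V) (ψ i)) - (∑ i, d i * G i) + 1) / (-(d j)) with ht
    have ht0 : 0 < t := div_pos (by linarith) (by linarith)
    obtain ⟨v, hv⟩ := hsurj (fun i => G i - (if i = j then t else 0))
    have hvK : v ∈ K := hmemK v fun i => by
      rw [hv i]
      split <;> linarith
    have hm := hmax v hvK
    have hsplit : (∑ i, d i * b (↑v : V) (ψ i)) = (∑ i, d i * G i) - d j * t := by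
      have : ∀ i, d i * b (↑v : V) (ψ i) = d i * G i - (if i = j then d i * t else 0) := by
        intro i
        rw [hv i]
        split <;> ring
      rw [Finset.sum_congr rfl fun i _ => this i, Finset.sum_sub_distrib,
        Finset.sum_ite_eq' Finset.univ j (fun i => d i * t)]
      simp
    have hteq : -(d j) * t = (∑ i, d i * b (↑u : V) (ψ i)) - (∑ i, d i * G i) + 1 := by
      rw [ht, mul_comm, div_mul_cancel₀ _ (neg_ne_zero.2 hneg.ne)]
    rw [hsplit] at hm
    linarith
  -- complementarity
  have hcomp : (∑ i, d i * (G i - b (↑u : V) (ψ i))) = 0 := by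
    have h1 : (∑ i, d i * (G i - b (↑u : V) (ψ i))) ≤ 0 := by
      have : (∑ i, d i * (G i - b (↑u : V) (ψ i)))
          = (∑ i, d i * G i) - ∑ i, d i * b (↑u : V) (ψ i) := by
        rw [← Finset.sum_sub_distrib]
        congr 1
        ext i
        ring
      rw [this]
      linarith
    have h2 : 0 ≤ ∑ i, d i * (G i - b (↑u : V) (ψ i)) :=
      Finset.sum_nonneg fun i _ => mul_nonneg (hd0 i) (by linarith [huG i])
    linarith
  set lam : Q := ∑ j, d j • ψ j with hlam
  have hlamQn : lam ∈ Qn := by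
    rw [hQn, hlam]
    exact Submodule.sum_mem _ fun j _ =>
      Submodule.smul_mem _ _ (Submodule.subset_span (Set.mem_range_self j))
  have hlamMn : lam ∈ Mn := by
    rw [hMn]
    exact ⟨d, hd0, rfl⟩
  have heqn : ∀ vn ∈ Vn, a (↑u : V) vn + b vn lam = f vn := by
    intro vn hvn
    have := hrep ⟨vn, hvn⟩
    rw [hfV, haV] at this
    rw [hlam, hbsum]
    simp only at this
    linarith
  have hfeas : ∀ qn ∈ Mn, 0 ≤ g qn - b (↑u : V) qn := fun qn hqn =>
    sub_nonneg.2 (huK qn hqn)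
  have hcompl : g lam - b (↑u : V) lam = 0 := by
    rw [hlam, hgsum, hbsum]
    rw [← hcomp]
    rw [← Finset.sum_sub_distrib]
    congr 1
    ext i
    ring
  refine ⟨((↑u : V), lam), ⟨u.2, hlamQn, heqn, hfeas, hlamMn, hcompl⟩, ?_⟩
  rintro ⟨u₂, lam₂⟩ ⟨h1, h2, h3, h4, h5, h6⟩
  have hu2 : u₂ = (↑u : V) := by
    have hwdVn : u₂ - ↑u ∈ Vn := Submodule.sub_mem _ h1 u.2
    have e1 := h3 (u₂ - ↑u) hwdVn
    have e2 := heqn (u₂ - ↑u) hwdVn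
    have hb1 : b (u₂ - ↑u) lam ≤ 0 := by
      have hA := h4 lam hlamMn
      have hx : b (u₂ - ↑u) lam = b u₂ lam - b (↑u : V) lam := by
        rw [map_sub, ContinuousLinearMap.sub_apply]
      rw [hx]
      linarith [hcompl]
    have hb2 : 0 ≤ b (u₂ - ↑u) lam₂ := by
      have hA := hfeas lam₂ h5
      have hx : b (u₂ - ↑u) lam₂ = b u₂ lam₂ - b (↑u : V) lam₂ := by
        rw [map_sub, ContinuousLinearMap.sub_apply]
      rw [hx]
      linarith [h6]
    have haww : a (u₂ - ↑u) (u₂ - ↑u) ≤ 0 := by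
      have hsub : a (u₂ - ↑u) (u₂ - ↑u) = a u₂ (u₂ - ↑u) - a (↑u : V) (u₂ - ↑u) := by
        rw [map_sub a, ContinuousLinearMap.sub_apply]
      rw [hsub]
      linarith
    have hc := hcoer (u₂ - ↑u)
    have hsq : ‖u₂ - (↑u : V)‖ ^ 2 = 0 := by
      have h2 : ‖u₂ - (↑u : V)‖ ^ 2 ≤ 0 := by nlinarith
      exact le_antisymm h2 (sq_nonneg _)
    have hnorm0 : ‖u₂ - (↑u : V)‖ = 0 := (pow_eq_zero_iff two_ne_zero).1 hsq
    exact sub_eq_zero.1 (norm_eq_zero.1 hnorm0)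
  have hlam2 : lam₂ = lam := by
    have hz : ∀ v ∈ Vn, b v (lam₂ - lam) = 0 := by
      intro v hv
      have e1 := h3 v hv
      have e2 := heqn v hv
      rw [hu2] at e1
      have hx : b v (lam₂ - lam) = b v lam₂ - b v lam := map_sub _ _ _
      rw [hx]
      linarith
    have := hinj (lam₂ - lam) (Submodule.sub_mem _ h2 hlamQn) hz
    exact sub_eq_zero.1 this
  exact Prod.ext hu2 hlam2
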